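/- Scalar Fisher-information data-processing inequality for finite stochastic kernels (one-parameter instance of Supplementary Theorem S4): Let X and Z be finite nonempty types. Let k : X → Z → ℝ satisfy k x z ≥ 0 and ∑_z k x z = 1 for every x (a parameter-independent stochastic kernel). Let p : ℝ → X → ℝ be a family with p θ₀ x > 0 for all x, ∑_x p t x = 1 for all t, and with t ↦ p t x differentiable at θ₀ for every x. Define q t z = ∑_x k x z · p t x and assume q θ₀ z > 0 for all z. Then ∑_z (d/dt q t z |_{t=θ₀})² / q θ₀ z ≤ ∑_x (d/dt p t x |_{t=θ₀})² / p θ₀ x. -/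

import Mathlib

/-- Scalar Fisher-information data-processing inequality for finite stochastic
kernels (one-parameter instance of Supplementary Theorem S4). -/
theorem fisher_info_data_processing_finite_kernel
    {X Z : Type*} [Fintype X] [Nonempty X] [Fintype Z] [Nonempty Z]
    (k : X → Z → ℝ)
    (hk0 : ∀ x z, 0 ≤ k x z)
    (hk1 : ∀ x, ∑ z, k x z = 1)
    (θ₀ : ℝ) (p : ℝ → X → ℝ)
    (hp_pos : ∀ x, 0 < p θ₀ x)
    (hp_sum : ∀ t, ∑ x, p t x = 1)
    (hp_diff : ∀ x, DifferentiableAt ℝ (fun t => p t x) θ₀)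
    (q : ℝ → Z → ℝ)
    (hq : ∀ t z, q t z = ∑ x, k x z * p t x)
    (hq_pos : ∀ z, 0 < q θ₀ z) :
    ∑ z, (deriv (fun t => q t z) θ₀) ^ 2 / q θ₀ z
      ≤ ∑ x, (deriv (fun t => p t x) θ₀) ^ 2 / p θ₀ x := by
  set p' : X → ℝ := fun x => deriv (fun t => p t x) θ₀ with hp'
  -- derivative of q
  have hqderiv : ∀ z, deriv (fun t => q t z) θ₀ = ∑ x, k x z * p' x := by
    intro z
    have : HasDerivAt (fun t => q t z) (∑ x, k x z * p' x) θ₀ := by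
      have : HasDerivAt (fun t => ∑ x, k x z * p t x) (∑ x, k x z * p' x) θ₀ := by
        apply HasDerivAt.fun_sum
        intro x _
        exact ((hp_diff x).hasDerivAt).const_mul (k x z)
      exact this.congr_of_eventuallyEq (Filter.Eventually.of_forall fun t => (hq t z))
    exact this.deriv
  -- pointwise bound for each z via Sedrakyan on the support of k · z
  have key : ∀ z, (deriv (fun t => q t z) θ₀) ^ 2 / q θ₀ z
      ≤ ∑ x, k x z * (p' x ^ 2 / p θ₀ x) := by
    intro z
    set S : Finset X := Finset.univ.filter (fun x => k x z ≠ 0) with hS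
    have hsum_f : (∑ x ∈ S, k x z * p' x) = ∑ x, k x z * p' x := by
      refine Finset.sum_filter_of_ne ?_
      intro x _ h hk
      exact h (by rw [hk, zero_mul])
    have hsum_g : (∑ x ∈ S, k x z * p θ₀ x) = q θ₀ z := by
      rw [hq θ₀ z]
      refine Finset.sum_filter_of_ne ?_
      intro x _ h hk
      exact h (by rw [hk, zero_mul])
    have hgpos : ∀ x ∈ S, 0 < k x z * p θ₀ x := by
      intro x hx
      have : k x z ≠ 0 := (Finset.mem_filter.mp hx).2
      exact mul_pos (lt_of_le_of_ne (hk0 x z) (Ne.symm this)) (hp_pos x)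
    have := Finset.sq_sum_div_le_sum_sq_div S (fun x => k x z * p' x) hgpos
    rw [hsum_f, hsum_g] at this
    rw [hqderiv z]
    refine this.trans ?_
    have heq : ∀ x ∈ S, (k x z * p' x) ^ 2 / (k x z * p θ₀ x)
        = k x z * (p' x ^ 2 / p θ₀ x) := by
      intro x hx
      have hknz : k x z ≠ 0 := (Finset.mem_filter.mp hx).2
      have h1 : (k x z * p' x) ^ 2 = k x z * (k x z * p' x ^ 2) := by ring
      rw [h1, mul_div_mul_left _ _ hknz, mul_div_assoc]
    rw [Finset.sum_congr rfl heq]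
    refine Finset.sum_le_sum_of_subset_of_nonneg (Finset.filter_subset _ _) ?_
    intro x _ _
    exact mul_nonneg (hk0 x z) (div_nonneg (sq_nonneg _) (hp_pos x).le)
  calc ∑ z, (deriv (fun t => q t z) θ₀) ^ 2 / q θ₀ z
      ≤ ∑ z, ∑ x, k x z * (p' x ^ 2 / p θ₀ x) := Finset.sum_le_sum fun z _ => key z
    _ = ∑ x, (∑ z, k x z) * (p' x ^ 2 / p θ₀ x) := by
        rw [Finset.sum_comm]
        simp [Finset.sum_mul]
    _ = ∑ x, (deriv (fun t => p t x) θ₀) ^ 2 / p θ₀ x := by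
        simp [hk1, hp']
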